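/- Let N be the lowest-order hexahedral Nédélec space N = { (a₁+a₂y+a₃z+a₄yz, b₁+b₂z+b₃x+b₄zx, c₁+c₂x+c₃y+c₄xy) } on the reference cube [0,1]³. A vector field v ∈ N is uniquely determined by its twelve edge degrees of freedom, namely the integrals of the tangential component of v along the twelve edges of the cube; i.e., if all twelve edge integrals of v vanish, then v = 0. -/
import Mathlib

/-- Unisolvence of the lowest-order hexahedral Nédélec element on the reference cube
`[0,1]³`: if all twelve edge integrals of the tangential component vanish, then `v = 0`. -/
theorem stmt_11 (a₁ a₂ a₃ a₄ b₁ b₂ b₃ b₄ c₁ c₂ c₃ c₄ : ℝ)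
    (f : (Fin 3 → ℝ) → (Fin 3 → ℝ))
    (hf : f = fun p => ![a₁ + a₂ * p 1 + a₃ * p 2 + a₄ * p 1 * p 2,
                         b₁ + b₂ * p 2 + b₃ * p 0 + b₄ * p 2 * p 0,
                         c₁ + c₂ * p 0 + c₃ * p 1 + c₄ * p 0 * p 1])
    (hx : ∀ y ∈ ({0, 1} : Set ℝ), ∀ z ∈ ({0, 1} : Set ℝ),
      (∫ t in (0:ℝ)..1, f ![t, y, z] 0) = 0)
    (hy : ∀ x ∈ ({0, 1} : Set ℝ), ∀ z ∈ ({0, 1} : Set ℝ),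
      (∫ t in (0:ℝ)..1, f ![x, t, z] 1) = 0)
    (hz : ∀ x ∈ ({0, 1} : Set ℝ), ∀ y ∈ ({0, 1} : Set ℝ),
      (∫ t in (0:ℝ)..1, f ![x, y, t] 2) = 0) :
    f = 0 := by
  have h0 : (0:ℝ) ∈ ({0, 1} : Set ℝ) := by simp
  have h1 : (1:ℝ) ∈ ({0, 1} : Set ℝ) := by simp
  have hx00 := hx 0 h0 0 h0; have hx10 := hx 1 h1 0 h0
  have hx01 := hx 0 h0 1 h1; have hx11 := hx 1 h1 1 h1
  have hy00 := hy 0 h0 0 h0; have hy10 := hy 1 h1 0 h0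
  have hy01 := hy 0 h0 1 h1; have hy11 := hy 1 h1 1 h1
  have hz00 := hz 0 h0 0 h0; have hz10 := hz 1 h1 0 h0
  have hz01 := hz 0 h0 1 h1; have hz11 := hz 1 h1 1 h1
  simp [hf, intervalIntegral.integral_const] at hx00 hx10 hx01 hx11 hy00 hy10 hy01 hy11 hz00 hz10 hz01 hz11
  have ha2 : a₂ = 0 := by linarith
  have ha3 : a₃ = 0 := by linarith
  have ha4 : a₄ = 0 := by linarith
  have hb2 : b₂ = 0 := by linarith
  have hb3 : b₃ = 0 := by linarith
  have hb4 : b₄ = 0 := by linarith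
  have hc2 : c₂ = 0 := by linarith
  have hc3 : c₃ = 0 := by linarith
  have hc4 : c₄ = 0 := by linarith
  subst hf
  funext p i
  fin_cases i <;> simp [hx00, hy00, hz00, ha2, ha3, ha4, hb2, hb3, hb4, hc2, hc3, hc4]
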